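/- Let X be a metric space and let T denote the collection of ordered pairs (A,B) of nonempty bounded subsets of X. Let (R_i)_{i∈I} be a nonempty family where each R_i assigns to every (A,B) ∈ T a relation R_i(A,B) ⊆ A × B, and define d^i(A,B) := sSup { d(a,b) : (a,b) ∈ R_i(A,B) } (with sSup ∅ = 0). Assume: (directedness) for all i, j ∈ I there exists k ∈ I with R_k(A,B) ⊆ R_i(A,B) ∩ R_j(A,B) for all (A,B) ∈ T; and (triangle) for each i and all nonempty bounded A, B, C, d^i(A,B) ≤ d^i(A,C) + d^i(C,B). Then the collective upper relational distance d(A,B) := inf_{i∈I} d^i(A,B) also satisfies the triangle inequality: d(A,B) ≤ d(A,C) + d(C,B) for all nonempty bounded A, B, C. -/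

import Mathlib

/-- The upper relational distance associated to a relation `R ⊆ X × X`:
`d^R := sSup {d(a,b) : (a,b) ∈ R}` (with `sSup ∅ = 0`). -/
lemma upperRelDist_nonneg' {X : Type*} [MetricSpace X] (R : Set (X × X)) :
    0 ≤ sSup ((fun p : X × X => dist p.1 p.2) '' R) :=
  Real.sSup_nonneg (by rintro x ⟨p, _, rfl⟩; exact dist_nonneg)

noncomputable def upperRelDist {X : Type*} [MetricSpace X] (R : Set (X × X)) : ℝ :=
  sSup ((fun p : X × X => dist p.1 p.2) '' R)

/-- If each member `d^i` of a directed family of upper relational distances satisfies the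
triangle inequality, then so does the collective upper relational distance
`d(A,B) = ⨅ i, d^i(A,B)`. -/
theorem collectiveUpperRelDist_triangle {X : Type*} [MetricSpace X]
    {I : Type*} [Nonempty I]
    (R : I → Set X → Set X → Set (X × X))
    (hsub : ∀ (i : I) (A B : Set X), A.Nonempty → B.Nonempty →
      Bornology.IsBounded A → Bornology.IsBounded B → R i A B ⊆ A ×ˢ B)
    (hdir : ∀ i j : I, ∃ k : I, ∀ (A B : Set X), A.Nonempty → B.Nonempty →
      Bornology.IsBounded A → Bornology.IsBounded B →
      R k A B ⊆ R i A B ∩ R j A B)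
    (htri : ∀ (i : I) (A B C : Set X), A.Nonempty → B.Nonempty → C.Nonempty →
      Bornology.IsBounded A → Bornology.IsBounded B → Bornology.IsBounded C →
      upperRelDist (R i A B) ≤ upperRelDist (R i A C) + upperRelDist (R i C B)) :
    ∀ (A B C : Set X), A.Nonempty → B.Nonempty → C.Nonempty →
      Bornology.IsBounded A → Bornology.IsBounded B → Bornology.IsBounded C →
      (⨅ i : I, upperRelDist (R i A B)) ≤
        (⨅ i : I, upperRelDist (R i A C)) + (⨅ i : I, upperRelDist (R i C B)) := by
  intro A B C hA hB hC hbA hbB hbC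
  have nonneg : ∀ (S : Set (X × X)), 0 ≤ upperRelDist S := fun S => upperRelDist_nonneg' S
  -- boundedness of images
  have bdd : ∀ (A B : Set X), Bornology.IsBounded A → Bornology.IsBounded B →
      ∀ (S : Set (X × X)), S ⊆ A ×ˢ B →
      BddAbove ((fun p : X × X => dist p.1 p.2) '' S) := by
    intro A B hbA hbB S hS
    obtain ⟨M, hM⟩ := Metric.isBounded_iff.mp (hbA.union hbB)
    refine ⟨M ⊔ 0, ?_⟩
    rintro x ⟨p, hp, rfl⟩
    obtain ⟨h1, h2⟩ := hS hp
    exact le_sup_of_le_left (hM (Or.inl h1) (Or.inr h2))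
  have mono : ∀ (A B : Set X), Bornology.IsBounded A → Bornology.IsBounded B →
      ∀ (S T : Set (X × X)), S ⊆ T → T ⊆ A ×ˢ B →
      upperRelDist S ≤ upperRelDist T := by
    intro A B hbA hbB S T hST hT
    rcases S.eq_empty_or_nonempty with rfl | hSne
    · simpa [upperRelDist] using nonneg T
    · exact csSup_le_csSup (bdd A B hbA hbB T hT) (hSne.image _) (Set.image_mono hST)
  have bdib : ∀ (A B : Set X), BddBelow (Set.range fun i => upperRelDist (R i A B)) :=
    fun A B => ⟨0, by rintro x ⟨i, rfl⟩; exact nonneg _⟩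
  refine le_of_forall_pos_le_add ?_
  intro ε hε
  obtain ⟨i, hi⟩ := exists_lt_of_ciInf_lt
    (lt_add_of_pos_right (⨅ i : I, upperRelDist (R i A C)) (half_pos hε))
  obtain ⟨j, hj⟩ := exists_lt_of_ciInf_lt
    (lt_add_of_pos_right (⨅ i : I, upperRelDist (R i C B)) (half_pos hε))
  obtain ⟨k, hk⟩ := hdir i j
  have h1 : upperRelDist (R k A C) ≤ upperRelDist (R i A C) :=
    mono A C hbA hbC _ _ (fun p hp => ((hk A C hA hC hbA hbC) hp).1) (hsub i A C hA hC hbA hbC)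
  have h2 : upperRelDist (R k C B) ≤ upperRelDist (R j C B) :=
    mono C B hbC hbB _ _ (fun p hp => ((hk C B hC hB hbC hbB) hp).2) (hsub j C B hC hB hbC hbB)
  calc (⨅ i : I, upperRelDist (R i A B)) ≤ upperRelDist (R k A B) := ciInf_le (bdib A B) k
    _ ≤ upperRelDist (R k A C) + upperRelDist (R k C B) := htri k A B C hA hB hC hbA hbB hbC
    _ ≤ upperRelDist (R i A C) + upperRelDist (R j C B) := add_le_add h1 h2
    _ ≤ ((⨅ i : I, upperRelDist (R i A C)) + ε/2) + ((⨅ i : I, upperRelDist (R i C B)) + ε/2) :=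
        add_le_add hi.le hj.le
    _ = (⨅ i : I, upperRelDist (R i A C)) + (⨅ i : I, upperRelDist (R i C B)) + ε := by ring
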